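/- Let g : ℝ^n → ℝ be a convex polynomial function with g(0) = 0 and g(x) > 0 for all x ≠ 0, let A = {(x, z) ∈ ℝ^n × ℝ : z ≥ g(x)} and B = {(x, 0) : x ∈ ℝ^n} ⊆ ℝ^{n+1}. Suppose there exist C > 0, a natural number d ≥ 2, and ε > 0 such that g(x)² ≥ C‖x‖^{2d} for all x ∈ ℝ^n with ‖x‖ ≤ ε. Let {a_k} and {b_k} be sequences in ℝ^{n+1} with b_k = P_B(a_k) and a_{k+1} = P_A(b_k) for all k, and suppose ‖b_0‖ ≤ ε. Then limsup_{k→∞} ((d−1)C)^{1/(2d−2)} · k^{1/(2d−2)} · ‖b_k‖ ≤ 1; in particular ‖b_k‖ = O(k^{−1/(2d−2)}) as k → ∞. -/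

import Mathlib

open Filter

/-- `u` is the metric projection of `p` onto `S`. -/
def IsMetricProj {E : Type*} [NormedAddCommGroup E] (S : Set E) (p u : E) : Prop :=
  u ∈ S ∧ ∀ s ∈ S, ‖u - p‖ ≤ ‖s - p‖

section helpers

variable {E : Type*} [NormedAddCommGroup E] [InnerProductSpace ℝ E]

lemma proj_inner_le {S : Set E} (hS : Convex ℝ S) {p u : E} (h : IsMetricProj S p u) :
    ∀ s ∈ S, (inner ℝ (p - u) (s - u) : ℝ) ≤ 0 := by
  rw [← norm_eq_iInf_iff_real_inner_le_zero hS h.1]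
  haveI : Nonempty S := ⟨⟨u, h.1⟩⟩
  apply le_antisymm
  · apply le_ciInf
    intro w
    rw [norm_sub_rev p u, norm_sub_rev p w]
    exact h.2 w w.2
  · exact ciInf_le ⟨0, fun _ ⟨_, hx⟩ => hx ▸ norm_nonneg _⟩ (⟨u, h.1⟩ : S)

lemma proj_sq_add_sq_le {S : Set E} (hS : Convex ℝ S) {p u : E} (h : IsMetricProj S p u)
    {q : E} (hq : q ∈ S) : ‖u - q‖ ^ 2 + ‖u - p‖ ^ 2 ≤ ‖p - q‖ ^ 2 := by
  have h1 : (inner ℝ (p - u) (q - u) : ℝ) ≤ 0 := proj_inner_le hS h q hq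
  have h2 : p - q = (p - u) + (u - q) := by abel
  have h3 : ‖p - q‖ ^ 2 = ‖p - u‖ ^ 2 + 2 * (inner ℝ (p - u) (u - q) : ℝ) + ‖u - q‖ ^ 2 := by
    rw [h2]; exact norm_add_sq_real _ _
  have h4 : (inner ℝ (p - u) (u - q) : ℝ) = - (inner ℝ (p - u) (q - u) : ℝ) := by
    rw [← inner_neg_right]; congr 1; abel
  rw [norm_sub_rev u p]; linarith

end helpers

lemma bern {m : ℕ} {u : ℝ} (hu0 : 0 ≤ u) (hu1 : u < 1) :
    1 + m * u ≤ ((1 - u) ^ m)⁻¹ := by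
  have hq : (0:ℝ) ≤ 1 - u := by linarith
  have h1 : (1 + m * u) * (1 - u) ^ m ≤ 1 := by
    calc (1 + m * u) * (1 - u) ^ m ≤ (1 + u) ^ m * (1 - u) ^ m := by
          apply mul_le_mul_of_nonneg_right (one_add_mul_le_pow (by linarith) m)
          positivity
      _ = ((1 + u) * (1 - u)) ^ m := (mul_pow _ _ _).symm
      _ ≤ 1 ^ m := by
          apply pow_le_pow_left₀ (by nlinarith) (by nlinarith)
      _ = 1 := one_pow m
  have hq' : (0:ℝ) < 1 - u := by linarith
  have hp : (0:ℝ) < (1 - u) ^ m := pow_pos hq' m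
  rw [← one_div, le_div_iff₀ hp]
  exact h1

lemma rec_decay {s : ℕ → ℝ} (hs0 : ∀ k, 0 ≤ s k) {q : ℕ} (hq : 2 ≤ q) {γ : ℝ} (hγ : 0 < γ)
    {K : ℕ} (hrec : ∀ k, K ≤ k → s (k + 1) ≤ s k - γ * s k ^ q) :
    ∀ j, 1 ≤ j → ((q : ℝ) - 1) * γ * j * s (K + j) ^ (q - 1) ≤ 1 := by
  have hmono : ∀ k, K ≤ k → s (k + 1) ≤ s k := by
    intro k hk
    have := hrec k hk
    nlinarith [pow_nonneg (hs0 k) q, mul_nonneg hγ.le (pow_nonneg (hs0 k) q)]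
  have key : ∀ j, 0 < s (K + j) →
      ((s K ^ (q - 1))⁻¹ + j * (((q:ℝ) - 1) * γ)) ≤ (s (K + j) ^ (q - 1))⁻¹ := by
    intro j
    induction j with
    | zero => intro _; simp
    | succ j ih =>
      intro hpos
      have hle : s (K + j + 1) ≤ s (K + j) := hmono (K + j) (Nat.le_add_right _ _)
      have hposj : 0 < s (K + j) := lt_of_lt_of_le (by rwa [Nat.add_succ] at hpos) hle
      have ihj := ih hposj
      set x := s (K + j) with hx
      set y := s (K + j + 1) with hy
      have hrecj : y ≤ x - γ * x ^ q := hrec (K + j) (Nat.le_add_right _ _)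
      have hu0 : 0 ≤ γ * x ^ (q - 1) := mul_nonneg hγ.le (pow_nonneg hposj.le _)
      have hposy : 0 < y := by rwa [Nat.add_succ] at hpos
      have hxq : x ^ q = x ^ (q - 1) * x := by
        rw [← pow_succ]; congr 1; omega
      have hfac : x - γ * x ^ q = x * (1 - γ * x ^ (q - 1)) := by rw [hxq]; ring
      have hu1 : γ * x ^ (q - 1) < 1 := by
        by_contra hcon
        push_neg at hcon
        have : x * (1 - γ * x ^ (q - 1)) ≤ 0 := by nlinarith
        rw [hfac] at hrecj; linarith
      have hyx : y ^ (q - 1) ≤ (x * (1 - γ * x ^ (q - 1))) ^ (q - 1) := by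
        apply pow_le_pow_left₀ hposy.le
        rw [← hfac]; exact hrecj
      have hxpos : (0:ℝ) < x ^ (q - 1) := pow_pos hposj _
      have hypos : (0:ℝ) < y ^ (q - 1) := pow_pos hposy _
      have hstep : (x ^ (q - 1))⁻¹ + ((q:ℝ) - 1) * γ ≤ (y ^ (q - 1))⁻¹ := by
        have hber := bern (m := q - 1) hu0 hu1
        have h2 : (y ^ (q - 1))⁻¹ ≥ ((x * (1 - γ * x ^ (q - 1))) ^ (q - 1))⁻¹ := by
          apply one_div_le_one_div_of_le at hyx
          · rw [one_div, one_div] at hyx; exact hyx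
          · positivity
        have h3 : ((x * (1 - γ * x ^ (q - 1))) ^ (q - 1))⁻¹
            = (x ^ (q - 1))⁻¹ * ((1 - γ * x ^ (q - 1)) ^ (q - 1))⁻¹ := by
          rw [mul_pow, mul_inv]
        have h4 : (x ^ (q - 1))⁻¹ * ((1 - γ * x ^ (q - 1)) ^ (q - 1))⁻¹
            ≥ (x ^ (q - 1))⁻¹ * (1 + (q - 1 : ℕ) * (γ * x ^ (q - 1))) := by
          apply mul_le_mul_of_nonneg_left hber (by positivity)
        have h5 : (x ^ (q - 1))⁻¹ * (1 + (q - 1 : ℕ) * (γ * x ^ (q - 1)))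
            = (x ^ (q - 1))⁻¹ + ((q - 1 : ℕ) : ℝ) * γ := by
          field_simp
        have hcast : ((q - 1 : ℕ) : ℝ) = (q : ℝ) - 1 := by
          have : 1 ≤ q := by omega
          push_cast [this]; ring
        rw [hcast] at h4 h5
        linarith [h2, h3, h4, h5]
      have : (K + (j+1)) = (K + j) + 1 := rfl
      rw [this]
      push_cast
      linarith
  intro j hj
  by_cases hpos : 0 < s (K + j)
  · have hk := key j hpos
    have hxpos : (0:ℝ) < s (K + j) ^ (q - 1) := pow_pos hpos _
    have hKpos : (0:ℝ) ≤ (s K ^ (q - 1))⁻¹ := inv_nonneg.mpr (pow_nonneg (hs0 K) _)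
    have h1 : (j : ℝ) * (((q:ℝ) - 1) * γ) ≤ (s (K + j) ^ (q - 1))⁻¹ := by linarith
    calc ((q : ℝ) - 1) * γ * j * s (K + j) ^ (q - 1)
        = ((j : ℝ) * (((q:ℝ) - 1) * γ)) * s (K + j) ^ (q - 1) := by ring
      _ ≤ (s (K + j) ^ (q - 1))⁻¹ * s (K + j) ^ (q - 1) := by
          apply mul_le_mul_of_nonneg_right h1 hxpos.le
      _ = 1 := inv_mul_cancel₀ hxpos.ne'
  · have h0 : s (K + j) = 0 := le_antisymm (not_lt.mp hpos) (hs0 _)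
    rw [h0]
    have : (0:ℝ) ^ (q - 1) = 0 := by
      apply zero_pow; omega
    rw [this, mul_zero]
    norm_num

lemma rec_tendsto_zero {s : ℕ → ℝ} (hs0 : ∀ k, 0 ≤ s k) {q : ℕ} (hq : 1 ≤ q) {γ : ℝ} (hγ : 0 < γ)
    (hrec : ∀ k, s (k + 1) ≤ s k - γ * s k ^ q) :
    Filter.Tendsto s Filter.atTop (nhds 0) := by
  have hmono : Antitone s := by
    apply antitone_nat_of_succ_le
    intro k
    have := hrec k
    nlinarith [mul_nonneg hγ.le (pow_nonneg (hs0 k) q)]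
  have hbdd : BddBelow (Set.range s) := ⟨0, by rintro x ⟨k, rfl⟩; exact hs0 k⟩
  have htend : Filter.Tendsto s Filter.atTop (nhds (⨅ k, s k)) := tendsto_atTop_ciInf hmono hbdd
  set l := ⨅ k, s k with hl
  have hl0 : 0 ≤ l := le_ciInf hs0
  have ht1 : Filter.Tendsto (fun k => s (k + 1)) Filter.atTop (nhds l) :=
    htend.comp (Filter.tendsto_add_atTop_nat 1)
  have ht2 : Filter.Tendsto (fun k => s k - γ * s k ^ q) Filter.atTop (nhds (l - γ * l ^ q)) := by
    exact htend.sub ((tendsto_const_nhds).mul (htend.pow q))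
  have hle : l ≤ l - γ * l ^ q := le_of_tendsto_of_tendsto' ht1 ht2 (fun k => hrec k)
  have : γ * l ^ q ≤ 0 := by linarith
  have hlq : l ^ q ≤ 0 := by nlinarith
  have : l = 0 := by
    have h1 : l ^ q = 0 := le_antisymm hlq (pow_nonneg hl0 q)
    exact pow_eq_zero_iff (by omega) |>.mp h1
  rwa [this] at htend

lemma convex_tangent {E : Type*} [NormedAddCommGroup E] [NormedSpace ℝ E]
    {G : E → ℝ} (hconv : ConvexOn ℝ Set.univ G)
    (hdiff : Differentiable ℝ G) (x y : E) :
    fderiv ℝ G x (y - x) ≤ G y - G x := by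
  set L := fderiv ℝ G x (y - x) with hL
  have hF : HasDerivAt (fun t : ℝ => G (x + t • (y - x))) L 0 := by
    have h1 : HasDerivAt (fun t : ℝ => x + t • (y - x)) (y - x) 0 := by
      simpa using ((hasDerivAt_id (0:ℝ)).smul_const (y - x)).const_add x
    have h2 := (hdiff (x + (0:ℝ) • (y - x))).hasFDerivAt.comp_hasDerivAt 0 h1
    simpa [Function.comp_def, hL, map_sub] using h2
  have hslope : Filter.Tendsto (slope (fun t : ℝ => G (x + t • (y - x))) 0) (nhdsWithin 0 {(0:ℝ)}ᶜ)
      (nhds L) := (hasDerivAt_iff_tendsto_slope).mp hF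
  have hslope' : Filter.Tendsto (slope (fun t : ℝ => G (x + t • (y - x))) 0)
      (nhdsWithin 0 (Set.Ioi 0)) (nhds L) :=
    hslope.mono_left (nhdsWithin_mono 0 (fun t ht => ne_of_gt ht))
  apply le_of_tendsto hslope'
  filter_upwards [Ioc_mem_nhdsGT_of_mem (Set.left_mem_Ico.mpr one_pos)] with t ht
  rcases ht with ⟨ht0, ht1⟩
  have hcomb : G (x + t • (y - x)) ≤ (1 - t) * G x + t * G y := by
    have h := hconv.2 (Set.mem_univ x) (Set.mem_univ y) (by linarith : (0:ℝ) ≤ 1 - t)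
      ht0.le (by ring)
    have harg : (1 - t) • x + t • y = x + t • (y - x) := by
      rw [smul_sub, sub_smul]; module
    rw [harg] at h
    simpa using h
  rw [slope_def_field]
  have h0 : G (x + (0:ℝ) • (y - x)) = G x := by norm_num
  rw [h0, sub_zero, div_le_iff₀ ht0]
  nlinarith [hcomb]

lemma mv_contDiff (n : ℕ) (p : MvPolynomial (Fin n) ℝ) :
    ContDiff ℝ ⊤ (fun x : EuclideanSpace ℝ (Fin n) => MvPolynomial.eval (fun i => x i) p) := by
  induction p using MvPolynomial.induction_on with
  | C a => simpa using contDiff_const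
  | add p q hp hq => simpa [MvPolynomial.eval_add] using hp.add hq
  | mul_X p i hp =>
      simp only [MvPolynomial.eval_mul, MvPolynomial.eval_X]
      exact hp.mul (EuclideanSpace.proj (𝕜 := ℝ) (ι := Fin n) i).contDiff


def Xmap (n : ℕ) : EuclideanSpace ℝ (Fin (n+1)) → EuclideanSpace ℝ (Fin n) :=
  fun u => WithLp.toLp 2 (fun i => u i.castSucc)

noncomputable def Gfun (n : ℕ) (g : MvPolynomial (Fin n) ℝ) : EuclideanSpace ℝ (Fin n) → ℝ :=
  fun x => MvPolynomial.eval (fun i => x i) g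

lemma norm_split (n : ℕ) (u : EuclideanSpace ℝ (Fin (n+1))) :
    ‖Xmap n u‖ ^ 2 + (u (Fin.last n)) ^ 2 = ‖u‖ ^ 2 := by
  have h1 : ‖Xmap n u‖ ^ 2 = ∑ i : Fin n, ‖Xmap n u i‖ ^ 2 := by
    rw [EuclideanSpace.norm_eq, Real.sq_sqrt]; positivity
  have h2 : ‖u‖ ^ 2 = ∑ i : Fin (n+1), ‖u i‖ ^ 2 := by
    rw [EuclideanSpace.norm_eq, Real.sq_sqrt]; positivity
  rw [h1, h2, Fin.sum_univ_castSucc]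
  simp [Xmap, Real.norm_eq_abs, sq_abs]

lemma coord_le_norm (n : ℕ) (u : EuclideanSpace ℝ (Fin (n+1))) :
    u (Fin.last n) ≤ ‖u‖ := by
  have h := norm_split n u
  have h2 : (u (Fin.last n)) ^ 2 ≤ ‖u‖ ^ 2 := by nlinarith [sq_nonneg (‖Xmap n u‖)]
  have h3 : |u (Fin.last n)| ≤ ‖u‖ := by
    have := (pow_le_pow_iff_left₀ (abs_nonneg (u (Fin.last n))) (norm_nonneg u) two_ne_zero)
    rw [← this]
    rwa [sq_abs]
  exact le_trans (le_abs_self _) h3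

lemma xmap_le_norm (n : ℕ) (u : EuclideanSpace ℝ (Fin (n+1))) :
    ‖Xmap n u‖ ≤ ‖u‖ := by
  have h := norm_split n u
  have h2 : ‖Xmap n u‖ ^ 2 ≤ ‖u‖ ^ 2 := by nlinarith [sq_nonneg (u (Fin.last n))]
  rwa [pow_le_pow_iff_left₀ (norm_nonneg _) (norm_nonneg u) two_ne_zero] at h2

lemma xmap_norm_eq (n : ℕ) (u : EuclideanSpace ℝ (Fin (n+1))) (hu : u (Fin.last n) = 0) :
    ‖Xmap n u‖ = ‖u‖ := by
  have h := norm_split n u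
  rw [hu] at h
  have h2 : ‖Xmap n u‖ ^ 2 = ‖u‖ ^ 2 := by linarith [h]
  calc ‖Xmap n u‖ = Real.sqrt (‖Xmap n u‖ ^ 2) := (Real.sqrt_sq (norm_nonneg _)).symm
    _ = Real.sqrt (‖u‖ ^ 2) := by rw [h2]
    _ = ‖u‖ := Real.sqrt_sq (norm_nonneg _)

lemma dist_lower (n : ℕ) (g : MvPolynomial (Fin n) ℝ)
    (hGconv : ConvexOn ℝ Set.univ (Gfun n g))
    (hGd : Differentiable ℝ (Gfun n g))
    (p aa : EuclideanSpace ℝ (Fin (n+1))) (hp : p (Fin.last n) = 0)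
    (haa : Gfun n g (Xmap n aa) ≤ aa (Fin.last n)) :
    Gfun n g (Xmap n p) ≤ (1 + ‖fderiv ℝ (Gfun n g) (Xmap n p)‖) * ‖aa - p‖ := by
  set G := Gfun n g with hG
  set x := Xmap n p with hx
  set y := Xmap n aa with hyy
  set L := fderiv ℝ G x with hLdef
  have htan : L (y - x) ≤ G y - G x := convex_tangent hGconv hGd x y
  have hsub : y - x = Xmap n (aa - p) := rfl
  have hlast : (aa - p) (Fin.last n) ≤ ‖aa - p‖ := coord_le_norm n (aa - p)
  have hlast' : aa (Fin.last n) ≤ ‖aa - p‖ := by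
    have : (aa - p) (Fin.last n) = aa (Fin.last n) - p (Fin.last n) := rfl
    rw [this, hp, sub_zero] at hlast
    exact hlast
  have hL1 : -(L (y - x)) ≤ ‖L‖ * ‖aa - p‖ := by
    have h1 : ‖L (y - x)‖ ≤ ‖L‖ * ‖y - x‖ := L.le_opNorm (y - x)
    have h2 : ‖y - x‖ ≤ ‖aa - p‖ := by rw [hsub]; exact xmap_le_norm n (aa - p)
    have h3 : -(L (y - x)) ≤ ‖L (y - x)‖ := by
      rw [Real.norm_eq_abs]; exact neg_le_abs _
    calc -(L (y-x)) ≤ ‖L (y-x)‖ := h3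
      _ ≤ ‖L‖ * ‖y - x‖ := h1
      _ ≤ ‖L‖ * ‖aa - p‖ := mul_le_mul_of_nonneg_left h2 (norm_nonneg L)
  calc G x ≤ G y - L (y - x) := by linarith [htan]
    _ ≤ aa (Fin.last n) + (‖L‖ * ‖aa - p‖) := by linarith [haa, hL1]
    _ ≤ ‖aa - p‖ + ‖L‖ * ‖aa - p‖ := by linarith [hlast']
    _ = (1 + ‖L‖) * ‖aa - p‖ := by ring

lemma A_convex (n : ℕ) (g : MvPolynomial (Fin n) ℝ)
    (hGconv : ConvexOn ℝ Set.univ (Gfun n g)) :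
    Convex ℝ {u : EuclideanSpace ℝ (Fin (n+1)) | Gfun n g (Xmap n u) ≤ u (Fin.last n)} := by
  intro u hu v hv α β hα hβ hαβ
  simp only [Set.mem_setOf_eq] at hu hv ⊢
  have hcomb := hGconv.2 (Set.mem_univ (Xmap n u)) (Set.mem_univ (Xmap n v)) hα hβ hαβ
  have hXmc : Xmap n (α • u + β • v) = α • Xmap n u + β • Xmap n v := rfl
  have hlastc : (α • u + β • v) (Fin.last n) = α * u (Fin.last n) + β * v (Fin.last n) := rfl
  rw [hXmc, hlastc]
  calc Gfun n g (α • Xmap n u + β • Xmap n v)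
      ≤ α • Gfun n g (Xmap n u) + β • Gfun n g (Xmap n v) := hcomb
    _ ≤ α * u (Fin.last n) + β * v (Fin.last n) := by
        simp only [smul_eq_mul]
        exact add_le_add (mul_le_mul_of_nonneg_left hu hα) (mul_le_mul_of_nonneg_left hv hβ)

set_option maxHeartbeats 1000000 in
theorem stmt15 (n : ℕ) (g : MvPolynomial (Fin n) ℝ)
    (hconv : ConvexOn ℝ Set.univ (fun x : Fin n → ℝ => MvPolynomial.eval x g))
    (hg0 : MvPolynomial.eval (fun _ : Fin n => (0 : ℝ)) g = 0)
    (hgpos : ∀ x : Fin n → ℝ, x ≠ 0 → 0 < MvPolynomial.eval x g)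
    (A B : Set (EuclideanSpace ℝ (Fin (n + 1))))
    (hA : A = {u | MvPolynomial.eval (fun i : Fin n => u i.castSucc) g ≤ u (Fin.last n)})
    (hB : B = {u : EuclideanSpace ℝ (Fin (n + 1)) | u (Fin.last n) = 0})
    (C : ℝ) (hC : 0 < C) (d : ℕ) (hd : 2 ≤ d) (ε : ℝ) (hε : 0 < ε)
    (hgrowth : ∀ x : EuclideanSpace ℝ (Fin n), ‖x‖ ≤ ε →
      C * ‖x‖ ^ (2 * d) ≤ (MvPolynomial.eval (fun i => x i) g) ^ 2)
    (a b : ℕ → EuclideanSpace ℝ (Fin (n + 1)))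
    (hb : ∀ k, IsMetricProj B (a k) (b k))
    (ha : ∀ k, IsMetricProj A (b k) (a (k + 1)))
    (hb0 : ‖b 0‖ ≤ ε) :
    Filter.limsup (fun k : ℕ =>
        (((d : ℝ) - 1) * C) ^ (1 / (2 * (d : ℝ) - 2)) *
          (k : ℝ) ^ (1 / (2 * (d : ℝ) - 2)) * ‖b k‖) atTop ≤ 1 ∧
    ∃ M : ℝ, ∃ K : ℕ, 0 < M ∧ ∀ k ≥ K,
      ‖b k‖ ≤ M * (k : ℝ) ^ (-(1 / (2 * (d : ℝ) - 2))) := by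
  classical
  have hdr : (2:ℝ) ≤ (d:ℝ) := by exact_mod_cast hd
  -- basic facts about G
  have hGconv : ConvexOn ℝ Set.univ (Gfun n g) :=
    hconv.comp_linearMap (WithLp.linearEquiv 2 ℝ (Fin n → ℝ)).toLinearMap
  have hGc : ContDiff ℝ ⊤ (Gfun n g) := mv_contDiff n g
  have hGd : Differentiable ℝ (Gfun n g) := hGc.differentiable (by simp)
  have hG0 : Gfun n g 0 = 0 := hg0
  have hGnn : ∀ x, 0 ≤ Gfun n g x := by
    intro x
    by_cases hx : x = 0
    · rw [hx, hG0]
    · exact (hgpos (fun i => x i) (fun h => hx (by ext i; simpa using congrFun h i))).le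
  have hf0 : fderiv ℝ (Gfun n g) 0 = 0 := by
    apply IsLocalMin.fderiv_eq_zero
    apply Filter.Eventually.of_forall
    intro x
    rw [hG0]
    exact hGnn x
  have hVcont : Continuous fun x => ‖fderiv ℝ (Gfun n g) x‖ :=
    (hGc.continuous_fderiv (by simp)).norm
  -- sets
  have hAset : A = {u : EuclideanSpace ℝ (Fin (n+1)) | Gfun n g (Xmap n u) ≤ u (Fin.last n)} := hA
  have hAconv : Convex ℝ A := by rw [hAset]; exact A_convex n g hGconv
  have hBconv : Convex ℝ B := by
    rw [hB]
    intro u hu v hv α β hα hβ hαβ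
    simp only [Set.mem_setOf_eq] at hu hv ⊢
    have : (α • u + β • v) (Fin.last n) = α * u (Fin.last n) + β * v (Fin.last n) := rfl
    rw [this, hu, hv]; ring
  have h0A : (0 : EuclideanSpace ℝ (Fin (n+1))) ∈ A := by
    rw [hAset]
    show Gfun n g (Xmap n 0) ≤ (0 : EuclideanSpace ℝ (Fin (n+1))) (Fin.last n)
    have h1 : Xmap n (0 : EuclideanSpace ℝ (Fin (n+1))) = 0 := rfl
    have h2 : (0 : EuclideanSpace ℝ (Fin (n+1))) (Fin.last n) = 0 := rfl
    rw [h1, h2, hG0]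
  have h0B : (0 : EuclideanSpace ℝ (Fin (n+1))) ∈ B := by
    rw [hB]; exact rfl
  have hblast : ∀ k, b k (Fin.last n) = 0 := by
    intro k
    have := (hb k).1
    rw [hB] at this
    exact this
  have haA : ∀ k, Gfun n g (Xmap n (a (k+1))) ≤ a (k+1) (Fin.last n) := by
    intro k
    have := (ha k).1
    rw [hAset] at this
    exact this
  -- s and r
  set s : ℕ → ℝ := fun k => ‖b k‖ ^ 2 with hsdef
  have hs0 : ∀ k, 0 ≤ s k := fun k => sq_nonneg _
  have hnb : ∀ k, ‖Xmap n (b k)‖ = ‖b k‖ := fun k => xmap_norm_eq n (b k) (hblast k)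
  -- one-step decrease
  have hstep0 : ∀ k, ‖a (k+1)‖ ^ 2 + ‖a (k+1) - b k‖ ^ 2 ≤ ‖b k‖ ^ 2 := by
    intro k
    have := proj_sq_add_sq_le hAconv (ha k) h0A
    simpa [sub_zero] using this
  have hstep1 : ∀ k, ‖b (k+1)‖ ^ 2 ≤ ‖a (k+1)‖ ^ 2 := by
    intro k
    have := proj_sq_add_sq_le hBconv (hb (k+1)) h0B
    simp only [sub_zero] at this
    nlinarith [sq_nonneg (‖b (k+1) - a (k+1)‖)]
  have hrmono : ∀ k, ‖b (k+1)‖ ≤ ‖b k‖ := by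
    intro k
    have h1 : ‖b (k+1)‖ ^ 2 ≤ ‖b k‖ ^ 2 := by
      have := hstep0 k
      have := hstep1 k
      nlinarith [sq_nonneg (‖a (k+1) - b k‖)]
    rwa [pow_le_pow_iff_left₀ (norm_nonneg _) (norm_nonneg _) two_ne_zero] at h1
  have hrant : Antitone fun k => ‖b k‖ := antitone_nat_of_succ_le hrmono
  have hrle : ∀ k, ‖b k‖ ≤ ε := fun k => le_trans (hrant (Nat.zero_le k)) hb0
  -- main one-step inequality
  have hstepV : ∀ k, s (k+1) ≤ s k -
      (C / (1 + ‖fderiv ℝ (Gfun n g) (Xmap n (b k))‖) ^ 2) * s k ^ d := by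
    intro k
    set V := ‖fderiv ℝ (Gfun n g) (Xmap n (b k))‖ with hV
    have hVnn : 0 ≤ V := norm_nonneg _
    have hPpos : (0:ℝ) < (1 + V) ^ 2 := by positivity
    have hcore : Gfun n g (Xmap n (b k)) ≤ (1 + V) * ‖a (k+1) - b k‖ :=
      dist_lower n g hGconv hGd (b k) (a (k+1)) (hblast k) (haA k)
    have hgr : C * ‖Xmap n (b k)‖ ^ (2 * d) ≤ (Gfun n g (Xmap n (b k))) ^ 2 := by
      exact hgrowth (Xmap n (b k)) (by rw [hnb k]; exact hrle k)
    have hxnorm : ‖Xmap n (b k)‖ ^ (2 * d) = s k ^ d := by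
      rw [hnb k, pow_mul]
    have hsq : (Gfun n g (Xmap n (b k))) ^ 2 ≤ (1 + V) ^ 2 * ‖a (k+1) - b k‖ ^ 2 := by
      have h1 := hGnn (Xmap n (b k))
      nlinarith [hcore, norm_nonneg (a (k+1) - b k)]
    have hdist : (C / (1 + V) ^ 2) * s k ^ d ≤ ‖a (k+1) - b k‖ ^ 2 := by
      rw [div_mul_eq_mul_div, div_le_iff₀ hPpos]
      calc C * s k ^ d = C * ‖Xmap n (b k)‖ ^ (2*d) := by rw [hxnorm]
        _ ≤ (Gfun n g (Xmap n (b k))) ^ 2 := hgr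
        _ ≤ (1 + V) ^ 2 * ‖a (k+1) - b k‖ ^ 2 := hsq
        _ = ‖a (k+1) - b k‖ ^ 2 * (1 + V) ^ 2 := by ring
    have h0 := hstep0 k
    have h1 := hstep1 k
    simp only [hsdef]
    linarith
  -- uniform bound on the gradient over the ball
  obtain ⟨x0, hx0mem, hx0max⟩ := (isCompact_closedBall (0 : EuclideanSpace ℝ (Fin n)) ε).exists_isMaxOn
    ⟨0, Metric.mem_closedBall_self hε.le⟩ hVcont.continuousOn
  set Λ := ‖fderiv ℝ (Gfun n g) x0‖ with hΛ
  have hΛnn : 0 ≤ Λ := norm_nonneg _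
  have hΛb : ∀ x : EuclideanSpace ℝ (Fin n), ‖x‖ ≤ ε → ‖fderiv ℝ (Gfun n g) x‖ ≤ Λ := by
    intro x hx
    exact hx0max (by rwa [Metric.mem_closedBall, dist_zero_right])
  have hγ0 : (0:ℝ) < C / (1 + Λ) ^ 2 := by positivity
  have hrecAll : ∀ k, s (k+1) ≤ s k - (C / (1 + Λ) ^ 2) * s k ^ d := by
    intro k
    have h1 := hstepV k
    set V := ‖fderiv ℝ (Gfun n g) (Xmap n (b k))‖ with hV
    have hVΛ : V ≤ Λ := hΛb _ (by rw [hnb k]; exact hrle k)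
    have hVnn : (0:ℝ) ≤ V := norm_nonneg _
    have hmono : C / (1 + Λ) ^ 2 ≤ C / (1 + V) ^ 2 := by
      apply div_le_div_of_nonneg_left hC.le (by positivity)
      nlinarith
    have h2 : (C/(1+Λ)^2) * s k ^ d ≤ (C/(1+V)^2) * s k ^ d :=
      mul_le_mul_of_nonneg_right hmono (pow_nonneg (hs0 k) d)
    linarith
  have hstend : Filter.Tendsto s Filter.atTop (nhds 0) :=
    rec_tendsto_zero hs0 (by omega : 1 ≤ d) hγ0 hrecAll
  have hrtend : Filter.Tendsto (fun k => ‖b k‖) Filter.atTop (nhds 0) := by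
    have heq : (fun k => ‖b k‖) = fun k => Real.sqrt (s k) := by
      funext k
      rw [hsdef]
      exact (Real.sqrt_sq (norm_nonneg _)).symm
    rw [heq]
    have := (Real.continuous_sqrt.tendsto 0).comp hstend
    simpa [Function.comp_def] using this
  -- quantitative phase
  have hd1C : (0:ℝ) < ((d:ℝ) - 1) * C := by nlinarith
  set m := 2 * d - 2 with hmdef
  have hmne : m ≠ 0 := by omega
  have hmcast : ((m:ℕ):ℝ) = 2 * (d:ℝ) - 2 := by
    have h2d : (2:ℕ) ≤ 2 * d := by omega
    rw [hmdef, Nat.cast_sub h2d]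
    push_cast; ring
  have hlam : 1 / (2 * (d:ℝ) - 2) = ((m:ℕ):ℝ)⁻¹ := by rw [hmcast, one_div]
  have hquant : ∀ c : ℝ, 1 < c → ∃ K1 : ℕ, 1 ≤ K1 ∧ ∀ k, K1 ≤ k →
      (((d:ℝ) - 1) * C) ^ (1 / (2 * (d:ℝ) - 2)) * (k:ℝ) ^ (1 / (2 * (d:ℝ) - 2)) * ‖b k‖ ≤ c := by
    intro c hc
    have hc0 : (0:ℝ) < c := by linarith
    have hev : ∀ᶠ x : EuclideanSpace ℝ (Fin n) in nhds 0,
        (1 + ‖fderiv ℝ (Gfun n g) x‖) ^ 2 < c := by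
      have hcont : Continuous fun x : EuclideanSpace ℝ (Fin n) =>
          (1 + ‖fderiv ℝ (Gfun n g) x‖) ^ 2 := (continuous_const.add hVcont).pow 2
      have hval : (1 + ‖fderiv ℝ (Gfun n g) (0 : EuclideanSpace ℝ (Fin n))‖) ^ 2 = 1 := by
        rw [hf0]; simp
      have ht : Filter.Tendsto (fun x : EuclideanSpace ℝ (Fin n) =>
          (1 + ‖fderiv ℝ (Gfun n g) x‖) ^ 2) (nhds 0) (nhds 1) := by
        have h5 := hcont.continuousAt (x := (0 : EuclideanSpace ℝ (Fin n)))
        rwa [ContinuousAt, hval] at h5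
      exact ht.eventually_lt_const hc
    obtain ⟨ρ, hρ, hball⟩ := Metric.eventually_nhds_iff.mp hev
    have hevk : ∀ᶠ k in Filter.atTop, ‖b k‖ < ρ := hrtend.eventually_lt_const hρ
    obtain ⟨K, hK⟩ := Filter.eventually_atTop.mp hevk
    have hrecK : ∀ k, K ≤ k → s (k+1) ≤ s k - (C / c) * s k ^ d := by
      intro k hk
      have h1 := hstepV k
      have h2 : (1 + ‖fderiv ℝ (Gfun n g) (Xmap n (b k))‖) ^ 2 < c := by
        apply hball
        rw [dist_zero_right, hnb k]
        exact hK k hk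
      have hP : (0:ℝ) < (1 + ‖fderiv ℝ (Gfun n g) (Xmap n (b k))‖) ^ 2 := by positivity
      have h3 : C / c ≤ C / (1 + ‖fderiv ℝ (Gfun n g) (Xmap n (b k))‖) ^ 2 :=
        div_le_div_of_nonneg_left hC.le hP h2.le
      have h4 : (C / c) * s k ^ d ≤
          (C / (1 + ‖fderiv ℝ (Gfun n g) (Xmap n (b k))‖) ^ 2) * s k ^ d :=
        mul_le_mul_of_nonneg_right h3 (pow_nonneg (hs0 k) d)
      linarith
    have hdec := rec_decay hs0 hd (div_pos hC hc0) hrecK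
    refine ⟨max (K+1) (max 1 (Nat.ceil (c * (K:ℝ) / (c-1)))),
      le_trans (le_max_left 1 _) (le_max_right _ _), ?_⟩
    intro k hk
    have hkK1 : K + 1 ≤ k := le_trans (le_max_left _ _) hk
    have hkceil : Nat.ceil (c * (K:ℝ) / (c-1)) ≤ k :=
      le_trans (le_trans (le_max_right 1 _) (le_max_right (K+1) _)) hk
    set j := k - K with hjdef
    have hj1 : 1 ≤ j := by omega
    have hkj : K + j = k := by omega
    have hdj := hdec j hj1
    rw [hkj] at hdj
    have hjr : (j:ℝ) = (k:ℝ) - (K:ℝ) := by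
      rw [hjdef, Nat.cast_sub (by omega)]
    have hcm1 : (0:ℝ) < c - 1 := by linarith
    have hceilr : c * (K:ℝ) / (c-1) ≤ (k:ℝ) := by
      calc c * (K:ℝ) / (c-1) ≤ (Nat.ceil (c * (K:ℝ) / (c-1)) : ℝ) := Nat.le_ceil _
        _ ≤ (k:ℝ) := by exact_mod_cast hkceil
    have hcj : (k:ℝ) ≤ c * (j:ℝ) := by
      rw [hjr]
      have h6 := (div_le_iff₀ hcm1).mp hceilr
      nlinarith
    have hsd : (0:ℝ) ≤ s k ^ (d-1) := pow_nonneg (hs0 k) _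
    have h1 : ((d:ℝ)-1) * C * (j:ℝ) * s k ^ (d-1) ≤ c := by
      have h2 := mul_le_mul_of_nonneg_left hdj hc0.le
      calc ((d:ℝ)-1) * C * (j:ℝ) * s k ^ (d-1)
          = c * (((d:ℝ)-1) * (C/c) * (j:ℝ) * s k ^ (d-1)) := by field_simp
        _ ≤ c * 1 := h2
        _ = c := mul_one c
    have h2 : ((d:ℝ)-1) * C * (k:ℝ) * s k ^ (d-1) ≤ c * c := by
      have h3 : ((d:ℝ)-1) * C * (k:ℝ) ≤ ((d:ℝ)-1) * C * (c * (j:ℝ)) :=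
        mul_le_mul_of_nonneg_left hcj hd1C.le
      have hmul : ((d:ℝ)-1) * C * (k:ℝ) * s k ^ (d-1)
          ≤ ((d:ℝ)-1) * C * (c * (j:ℝ)) * s k ^ (d-1) :=
        mul_le_mul_of_nonneg_right h3 hsd
      calc ((d:ℝ)-1) * C * (k:ℝ) * s k ^ (d-1)
          ≤ ((d:ℝ)-1) * C * (c * (j:ℝ)) * s k ^ (d-1) := hmul
        _ = c * (((d:ℝ)-1) * C * (j:ℝ) * s k ^ (d-1)) := by ring
        _ ≤ c * c := mul_le_mul_of_nonneg_left h1 hc0.le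
    have h3 : c * c ≤ c ^ m := by
      have h4 : c ^ 2 ≤ c ^ m := pow_le_pow_right₀ hc.le (by omega)
      calc c * c = c ^ 2 := (sq c).symm
        _ ≤ c ^ m := h4
    have hrm : ‖b k‖ ^ m = s k ^ (d-1) := by
      have hm2 : m = 2 * (d-1) := by omega
      rw [hm2, pow_mul]
    have hQ : (((d:ℝ)-1) * C) * ((k:ℝ) * ‖b k‖ ^ m) ≤ c ^ m := by
      rw [hrm]
      have h5 : (((d:ℝ)-1) * C) * ((k:ℝ) * s k ^ (d-1))
          = ((d:ℝ)-1) * C * (k:ℝ) * s k ^ (d-1) := by ring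
      rw [h5]
      exact le_trans h2 h3
    have hb1 : (0:ℝ) ≤ ((d:ℝ)-1) * C := hd1C.le
    have hb2 : (0:ℝ) ≤ (k:ℝ) := Nat.cast_nonneg k
    have hb3 : (0:ℝ) ≤ ‖b k‖ ^ m := pow_nonneg (norm_nonneg _) m
    have key : ((((d:ℝ)-1) * C) * ((k:ℝ) * ‖b k‖ ^ m)) ^ ((m:ℕ):ℝ)⁻¹ ≤ c := by
      calc ((((d:ℝ)-1) * C) * ((k:ℝ) * ‖b k‖ ^ m)) ^ ((m:ℕ):ℝ)⁻¹
          ≤ (c ^ m) ^ ((m:ℕ):ℝ)⁻¹ := by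
            apply Real.rpow_le_rpow (mul_nonneg hb1 (mul_nonneg hb2 hb3)) hQ
            positivity
        _ = c := Real.pow_rpow_inv_natCast hc0.le hmne
    rw [Real.mul_rpow hb1 (mul_nonneg hb2 hb3), Real.mul_rpow hb2 hb3,
        Real.pow_rpow_inv_natCast (norm_nonneg _) hmne] at key
    rw [hlam]
    calc (((d:ℝ)-1) * C) ^ ((m:ℕ):ℝ)⁻¹ * (k:ℝ) ^ ((m:ℕ):ℝ)⁻¹ * ‖b k‖
        = (((d:ℝ)-1) * C) ^ ((m:ℕ):ℝ)⁻¹ * ((k:ℝ) ^ ((m:ℕ):ℝ)⁻¹ * ‖b k‖) := by ring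
      _ ≤ c := key
  constructor
  · apply le_of_forall_gt_imp_ge_of_dense
    intro c hc
    obtain ⟨K1, hK11, hK1⟩ := hquant c hc
    have hev : ∀ᶠ k : ℕ in Filter.atTop, (((d:ℝ) - 1) * C) ^ (1 / (2 * (d:ℝ) - 2)) *
        (k:ℝ) ^ (1 / (2 * (d:ℝ) - 2)) * ‖b k‖ ≤ c :=
      Filter.eventually_atTop.mpr ⟨K1, hK1⟩
    refine Filter.limsup_le_of_le (Filter.isCoboundedUnder_le_of_le Filter.atTop (x := 0) ?_) hev
    intro k
    exact mul_nonneg (mul_nonneg (Real.rpow_nonneg hd1C.le _)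
      (Real.rpow_nonneg (Nat.cast_nonneg _) _)) (norm_nonneg _)
  · obtain ⟨K1, hK11, hK1⟩ := hquant 2 one_lt_two
    have hPpos : (0:ℝ) < (((d:ℝ)-1) * C) ^ (1 / (2 * (d:ℝ) - 2)) :=
      Real.rpow_pos_of_pos hd1C _
    refine ⟨2 / ((((d:ℝ)-1) * C) ^ (1 / (2 * (d:ℝ) - 2))), K1, by positivity, ?_⟩
    intro k hk
    have h := hK1 k hk
    have hkpos : (0:ℝ) < (k:ℝ) := by
      have hk1 : 1 ≤ k := le_trans hK11 hk
      exact_mod_cast Nat.lt_of_lt_of_le Nat.zero_lt_one hk1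
    have hklpos : (0:ℝ) < (k:ℝ) ^ (1 / (2 * (d:ℝ) - 2)) := Real.rpow_pos_of_pos hkpos _
    rw [Real.rpow_neg hkpos.le]
    have h2 : ‖b k‖ * ((((d:ℝ)-1) * C) ^ (1 / (2 * (d:ℝ) - 2)) *
        (k:ℝ) ^ (1 / (2 * (d:ℝ) - 2))) ≤ 2 := by
      calc ‖b k‖ * ((((d:ℝ)-1) * C) ^ (1 / (2 * (d:ℝ) - 2)) * (k:ℝ) ^ (1 / (2 * (d:ℝ) - 2)))
          = (((d:ℝ)-1) * C) ^ (1 / (2 * (d:ℝ) - 2)) * (k:ℝ) ^ (1 / (2 * (d:ℝ) - 2)) * ‖b k‖ := by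
            ring
        _ ≤ 2 := h
    have h3 : ‖b k‖ ≤ 2 / ((((d:ℝ)-1) * C) ^ (1 / (2 * (d:ℝ) - 2)) *
        (k:ℝ) ^ (1 / (2 * (d:ℝ) - 2))) := by
      rw [le_div_iff₀ (mul_pos hPpos hklpos)]
      exact h2
    calc ‖b k‖ ≤ 2 / ((((d:ℝ)-1) * C) ^ (1 / (2 * (d:ℝ) - 2)) *
          (k:ℝ) ^ (1 / (2 * (d:ℝ) - 2))) := h3
      _ = 2 / ((((d:ℝ)-1) * C) ^ (1 / (2 * (d:ℝ) - 2))) *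
          ((k:ℝ) ^ (1 / (2 * (d:ℝ) - 2)))⁻¹ := by
        ring
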